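/- Let z_1, …, z_T be independent Bernoulli random variables with P(z_i = 1) = p_i ∈ [0,1], let Y = z_1 + … + z_T, and let ȳ = E[Y] = p_1 + … + p_T. If ȳ > 0, then |E[Y log Y] − ȳ log ȳ| ≤ 1, where Y log Y is interpreted with the convention 0·log 0 = 0. -/

import Mathlib

open MeasureTheory ProbabilityTheory Finset


private theorem ptlb (y b : ℝ) (hy : 0 ≤ y) (hb : 0 < b) :
    b * Real.log b + (Real.log b + 1) * (y - b) ≤ y * Real.log y := by
  rcases eq_or_lt_of_le hy with h | h
  · rw [← h]
    simp only [Real.log_zero, mul_zero, zero_sub, zero_mul]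
    nlinarith [Real.log_le_sub_one_of_pos hb]
  · have h2 : Real.log b - Real.log y ≤ b / y - 1 := by
      have h1 : Real.log (b / y) ≤ b / y - 1 := Real.log_le_sub_one_of_pos (by positivity)
      rwa [Real.log_div hb.ne' h.ne'] at h1
    have h3 : y * Real.log b - y * Real.log y ≤ b - y := by
      have := mul_le_mul_of_nonneg_left h2 (le_of_lt h)
      rw [mul_sub, mul_sub, mul_div_cancel₀ _ h.ne', mul_one] at this
      linarith
    nlinarith [Real.log_le_sub_one_of_pos hb]

private theorem ptub (y b : ℝ) (hy : 0 ≤ y) (hb : 0 < b) :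
    y * Real.log y ≤ y * Real.log b + (y * y - b * y) / b := by
  rcases eq_or_lt_of_le hy with h | h
  · rw [← h]; simp
  · have h2 : Real.log y - Real.log b ≤ y / b - 1 := by
      have h1 : Real.log (y / b) ≤ y / b - 1 := Real.log_le_sub_one_of_pos (by positivity)
      rwa [Real.log_div h.ne' hb.ne'] at h1
    have h3 : y * Real.log y - y * Real.log b ≤ y * (y / b) - y :=  by
      have := mul_le_mul_of_nonneg_left h2 (le_of_lt h)
      rw [mul_sub, mul_sub, mul_one] at this; linarith
    have h4 : y * (y / b) = y * y / b := by ring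
    rw [h4] at h3
    have : (y * y - b * y) / b = y * y / b - y := by field_simp
    linarith

/-- For independent Bernoulli random variables `z i` with parameters
`p i ∈ [0,1]`, `Y = ∑ i, z i` and `ȳ = E[Y] = ∑ i, p i > 0`,
`|E[Y log Y] - ȳ log ȳ| ≤ 1` (with the convention `0 · log 0 = 0`, automatic since
`Real.log 0 = 0`). -/
theorem abs_integral_mul_log_sub_le_one
    {Ω : Type*} [MeasurableSpace Ω] (μ : Measure Ω) [IsProbabilityMeasure μ]
    (T : ℕ) (z : Fin T → Ω → ℕ) (p : Fin T → ℝ)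
    (hmeas : ∀ i, Measurable (z i))
    (hval : ∀ i, ∀ ω, z i ω = 0 ∨ z i ω = 1)
    (hp01 : ∀ i, p i ∈ Set.Icc (0 : ℝ) 1)
    (hp : ∀ i, μ {ω | z i ω = 1} = ENNReal.ofReal (p i))
    (hindep : iIndepFun z μ)
    (hybar : 0 < ∑ i, p i) :
    |(∫ ω, ((∑ i, z i ω : ℕ) : ℝ) * Real.log ((∑ i, z i ω : ℕ) : ℝ) ∂μ) -
        (∑ i, p i) * Real.log (∑ i, p i)| ≤ 1 := by
  set b : ℝ := ∑ i, p i with hb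
  set zr : Fin T → Ω → ℝ := fun i ω => ((z i ω : ℕ) : ℝ) with hzr
  -- basic facts
  have hzr01 : ∀ i ω, zr i ω = 0 ∨ zr i ω = 1 := by
    intro i ω; rcases hval i ω with h | h <;> simp [hzr, h]
  have hzrmeas : ∀ i, Measurable (zr i) := fun i => (measurable_from_top).comp (hmeas i)
  have hzrint : ∀ i, Integrable (zr i) μ := by
    intro i
    refine (integrable_const (1:ℝ)).mono' (hzrmeas i).aestronglyMeasurable ?_
    filter_upwards with ω
    rcases hzr01 i ω with h | h <;> simp [h]
  have hEzr : ∀ i, ∫ ω, zr i ω ∂μ = p i := by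
    intro i
    have hset : MeasurableSet {ω | z i ω = 1} := (hmeas i) (measurableSet_singleton 1)
    have : (fun ω => zr i ω) = Set.indicator {ω | z i ω = 1} (fun _ => (1:ℝ)) := by
      funext ω
      rcases hval i ω with h | h <;> simp [hzr, h, Set.indicator_apply]
    rw [this, integral_indicator_const _ hset, measureReal_def, hp i, smul_eq_mul, mul_one,
      ENNReal.toReal_ofReal (hp01 i).1]
  -- product expectations
  have hzrintmul : ∀ i j, Integrable (fun ω => zr i ω * zr j ω) μ := by
    intro i j
    refine (integrable_const (1:ℝ)).mono' ((hzrmeas i).mul (hzrmeas j)).aestronglyMeasurable ?_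
    filter_upwards with ω
    rcases hzr01 i ω with h | h <;> rcases hzr01 j ω with h' | h' <;> simp [h, h']
  have hEmul : ∀ i j, i ≠ j → ∫ ω, zr i ω * zr j ω ∂μ = p i * p j := by
    intro i j hij
    have hind : IndepFun (zr i) (zr j) μ :=
      (hindep.indepFun hij).comp measurable_from_top measurable_from_top
    have := hind.integral_fun_mul_eq_mul_integral (hzrint i).aestronglyMeasurable (hzrint j).aestronglyMeasurable
    rw [← hEzr i, ← hEzr j]
    exact this
  have hEsq : ∀ i, ∫ ω, zr i ω * zr i ω ∂μ = p i := by
    intro i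
    have : (fun ω => zr i ω * zr i ω) = zr i := by
      funext ω; rcases hzr01 i ω with h | h <;> simp [h]
    rw [this, hEzr]
  -- Y
  set Y : Ω → ℝ := fun ω => ∑ i, zr i ω with hY
  have hYnn : ∀ ω, 0 ≤ Y ω := by
    intro ω; exact Finset.sum_nonneg fun i _ => by positivity
  have hYle : ∀ ω, Y ω ≤ T := by
    intro ω
    calc Y ω ≤ ∑ _i : Fin T, (1:ℝ) := Finset.sum_le_sum fun i _ => by
          rcases hzr01 i ω with h | h <;> simp [h]
      _ = T := by simp
  have hYmeas : Measurable Y := by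
    apply Finset.measurable_sum
    intro i _; exact hzrmeas i
  have hYint : Integrable Y μ := by
    refine (integrable_const (T:ℝ)).mono' hYmeas.aestronglyMeasurable ?_
    filter_upwards with ω
    rw [Real.norm_of_nonneg (hYnn ω)]; exact hYle ω
  have hEY : ∫ ω, Y ω ∂μ = b := by
    rw [hY, integral_finset_sum _ (fun i _ => hzrint i)]
    exact Finset.sum_congr rfl fun i _ => hEzr i
  -- second moment
  have hYsqint : Integrable (fun ω => Y ω * Y ω) μ := by
    refine (integrable_const ((T:ℝ)*T)).mono' (hYmeas.mul hYmeas).aestronglyMeasurable ?_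
    filter_upwards with ω
    rw [Real.norm_of_nonneg (by positivity)]
    exact mul_le_mul (hYle ω) (hYle ω) (hYnn ω) (by positivity)
  have hEYsq : ∫ ω, Y ω * Y ω ∂μ ≤ b * b + b := by
    have hexp : ∀ ω, Y ω * Y ω = ∑ i, ∑ j, zr i ω * zr j ω := by
      intro ω; rw [hY, Finset.sum_mul_sum]
    have h1 : ∫ ω, Y ω * Y ω ∂μ = ∑ i, ∑ j, ∫ ω, zr i ω * zr j ω ∂μ := by
      simp_rw [hexp]
      rw [integral_finset_sum _ (fun i _ => integrable_finset_sum _ (fun j _ => hzrintmul i j))]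
      exact Finset.sum_congr rfl fun i _ =>
        integral_finset_sum _ (fun j _ => hzrintmul i j)
    rw [h1]
    have h2 : ∀ i j : Fin T, ∫ ω, zr i ω * zr j ω ∂μ ≤ p i * p j + (if i = j then p i else 0) := by
      intro i j
      by_cases hij : i = j
      · subst hij
        rw [hEsq i]
        rw [if_pos rfl]
        nlinarith [(hp01 i).1]
      · rw [hEmul i j hij, if_neg hij]; simp
    calc (∑ i, ∑ j, ∫ ω, zr i ω * zr j ω ∂μ)
        ≤ ∑ i, ∑ j, (p i * p j + (if i = j then p i else 0)) :=
          Finset.sum_le_sum fun i _ => Finset.sum_le_sum fun j _ => h2 i j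
      _ = b * b + b := by
          simp_rw [Finset.sum_add_distrib, Finset.sum_ite_eq (Finset.univ : Finset (Fin T))]
          simp [← Finset.sum_mul_sum, hb]
  -- Y log Y
  have hY01 : ∀ ω, Y ω = 0 ∨ 1 ≤ Y ω := by
    intro ω
    have : Y ω = ((∑ i, z i ω : ℕ) : ℝ) := by rw [hY]; push_cast; rfl
    rw [this]
    rcases Nat.eq_zero_or_pos (∑ i, z i ω) with h | h
    · left; rw [h]; simp
    · right; exact_mod_cast h
  have hYlogmeas : Measurable (fun ω => Y ω * Real.log (Y ω)) :=
    hYmeas.mul (Real.measurable_log.comp hYmeas)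
  have hYlogint : Integrable (fun ω => Y ω * Real.log (Y ω)) μ := by
    refine (integrable_const ((T:ℝ)*T)).mono' hYlogmeas.aestronglyMeasurable ?_
    filter_upwards with ω
    rcases hY01 ω with h | h
    · rw [h]; simp; positivity
    · have hl0 : 0 ≤ Real.log (Y ω) := Real.log_nonneg h
      rw [Real.norm_of_nonneg (by positivity)]
      have hlle : Real.log (Y ω) ≤ Y ω - 1 := Real.log_le_sub_one_of_pos (by linarith)
      have := hYle ω
      nlinarith
  set L : ℝ := ∫ ω, Y ω * Real.log (Y ω) ∂μ with hL
  -- upper bound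
  have hup : L ≤ b * Real.log b + 1 := by
    have hI1 : Integrable (fun ω => Y ω * Real.log b) μ := hYint.mul_const _
    have hIbY : Integrable (fun ω => b * Y ω) μ := hYint.const_mul b
    have hIsub : Integrable (fun ω => Y ω * Y ω - b * Y ω) μ := hYsqint.sub hIbY
    have hI2 : Integrable (fun ω => (Y ω * Y ω - b * Y ω) / b) μ := hIsub.div_const b
    have hUint : Integrable (fun ω => Y ω * Real.log b + (Y ω * Y ω - b * Y ω) / b) μ :=
      hI1.add hI2
    have hle : L ≤ ∫ ω, (Y ω * Real.log b + (Y ω * Y ω - b * Y ω) / b) ∂μ :=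
      integral_mono hYlogint hUint (fun ω => ptub (Y ω) b (hYnn ω) hybar)
    have heq : ∫ ω, (Y ω * Real.log b + (Y ω * Y ω - b * Y ω) / b) ∂μ
        = b * Real.log b + ((∫ ω, Y ω * Y ω ∂μ) - b * b) / b := by
      rw [integral_add hI1 hI2, integral_mul_const, integral_div,
        integral_sub hYsqint hIbY, integral_const_mul, hEY]
    rw [heq] at hle
    have : ((∫ ω, Y ω * Y ω ∂μ) - b * b) / b ≤ 1 := by
      rw [div_le_one hybar]; linarith [hEYsq]
    linarith
  -- lower bound
  have hlo : b * Real.log b ≤ L := by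
    have hIc : Integrable (fun _ : Ω => b * Real.log b) μ := integrable_const _
    have hIyb : Integrable (fun ω => Y ω - b) μ := hYint.sub (integrable_const b)
    have hI3 : Integrable (fun ω => (Real.log b + 1) * (Y ω - b)) μ := hIyb.const_mul _
    have hLint : Integrable (fun ω => b * Real.log b + (Real.log b + 1) * (Y ω - b)) μ :=
      hIc.add hI3
    have hle : ∫ ω, (b * Real.log b + (Real.log b + 1) * (Y ω - b)) ∂μ ≤ L :=
      integral_mono hLint hYlogint (fun ω => ptlb (Y ω) b (hYnn ω) hybar)
    have heq : ∫ ω, (b * Real.log b + (Real.log b + 1) * (Y ω - b)) ∂μ = b * Real.log b := by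
      rw [integral_add hIc hI3, integral_const, integral_const_mul,
        integral_sub hYint (integrable_const b), integral_const, hEY]
      simp
    rwa [heq] at hle
  -- conclude
  have hcast : ∀ ω, ((∑ i, z i ω : ℕ) : ℝ) = Y ω := by
    intro ω; rw [hY]; push_cast; rfl
  have hgoal : (∫ ω, ((∑ i, z i ω : ℕ) : ℝ) * Real.log ((∑ i, z i ω : ℕ) : ℝ) ∂μ) = L := by
    rw [hL]; congr 1; funext ω; rw [hcast]
  rw [hgoal, abs_le]
  constructor <;> linarith
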